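/- For the function f(x,y) = 2/((x+1)^2+y^2) + 2/((x-1)^2+y^2) + 1/(2(x^2+(y+1)^2)) + 1/(2(x^2+(y-1)^2)) and λ(x,y) = 4f(x,y)/(x^2+y^2+1), the Euclidean Laplacian of log λ equals 256(x^2+y^2)/[5 + 5x^4 - 6y^2 + 5y^4 + 2x^2(3+5y^2)]^2 at all points where f is defined and positive. -/

import Mathlib

/-- The shape potential factor on the parallelogram shape sphere. -/
noncomputable def fP (x y : ℝ) : ℝ :=
  2 / ((x + 1) ^ 2 + y ^ 2) + 2 / ((x - 1) ^ 2 + y ^ 2) +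
    1 / (2 * (x ^ 2 + (y + 1) ^ 2)) + 1 / (2 * (x ^ 2 + (y - 1) ^ 2))

/-- The conformal factor of the Jacobi–Maupertuis metric in stereographic coordinates. -/
noncomputable def lamP (x y : ℝ) : ℝ := 4 * fP x y / (x ^ 2 + y ^ 2 + 1)

/-- The Euclidean Laplacian of a function of two real variables. -/
noncomputable def lap2 (g : ℝ → ℝ → ℝ) (x y : ℝ) : ℝ :=
  deriv (fun t => deriv (fun s => g s y) t) x +
    deriv (fun t => deriv (fun s => g x s) t) y

/-! ### Auxiliary definitions and lemmas -/

noncomputable def TP (a b : ℝ) : ℝ :=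
  5 + 5 * a ^ 4 - 6 * b ^ 2 + 5 * b ^ 4 + 2 * a ^ 2 * (3 + 5 * b ^ 2)

lemma TP_pos (a b : ℝ) : 0 < TP a b := by
  unfold TP
  nlinarith [sq_nonneg (b ^ 2 - 3/5), sq_nonneg a, sq_nonneg (a * b), sq_nonneg (a ^ 2)]

lemma pos_of_ne' {r : ℝ} (h : r ≠ 0) (h2 : 0 ≤ r) : 0 < r := lt_of_le_of_ne h2 (Ne.symm h)

noncomputable def vP (a b : ℝ) : ℝ :=
  Real.log 4 + Real.log (TP a b) - Real.log ((a + 1) ^ 2 + b ^ 2) - Real.log ((a - 1) ^ 2 + b ^ 2)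
    - Real.log (a ^ 2 + (b + 1) ^ 2) - Real.log (a ^ 2 + (b - 1) ^ 2)

lemma loglam_eq (a b : ℝ) (h1 : (a + 1) ^ 2 + b ^ 2 ≠ 0) (h2 : (a - 1) ^ 2 + b ^ 2 ≠ 0)
    (h3 : a ^ 2 + (b + 1) ^ 2 ≠ 0) (h4 : a ^ 2 + (b - 1) ^ 2 ≠ 0) :
    Real.log (lamP a b) = vP a b := by
  have p1 : 0 < (a + 1) ^ 2 + b ^ 2 := pos_of_ne' h1 (by positivity)
  have p2 : 0 < (a - 1) ^ 2 + b ^ 2 := pos_of_ne' h2 (by positivity)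
  have p3 : 0 < a ^ 2 + (b + 1) ^ 2 := pos_of_ne' h3 (by positivity)
  have p4 : 0 < a ^ 2 + (b - 1) ^ 2 := pos_of_ne' h4 (by positivity)
  have pT := TP_pos a b
  have hlam : lamP a b = 4 * TP a b / (((a + 1) ^ 2 + b ^ 2) * ((a - 1) ^ 2 + b ^ 2) *
      (a ^ 2 + (b + 1) ^ 2) * (a ^ 2 + (b - 1) ^ 2)) := by
    unfold lamP fP TP
    have h5 : a ^ 2 + b ^ 2 + 1 ≠ 0 := by positivity
    field_simp
    ring
  rw [hlam, vP]
  rw [Real.log_div (by positivity) (by positivity),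
      Real.log_mul (by norm_num) (ne_of_gt pT),
      Real.log_mul (by positivity) (ne_of_gt p4),
      Real.log_mul (by positivity) (ne_of_gt p3),
      Real.log_mul (ne_of_gt p1) (ne_of_gt p2)]
  ring

noncomputable def g1 (a b : ℝ) : ℝ :=
  (20 * a ^ 3 + 12 * a + 20 * a * b ^ 2) / TP a b - 2 * (a + 1) / ((a + 1) ^ 2 + b ^ 2)
    - 2 * (a - 1) / ((a - 1) ^ 2 + b ^ 2) - 2 * a / (a ^ 2 + (b + 1) ^ 2)
    - 2 * a / (a ^ 2 + (b - 1) ^ 2)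

noncomputable def g2 (a b : ℝ) : ℝ :=
  (20 * b ^ 3 - 12 * b + 20 * a ^ 2 * b) / TP a b - 2 * b / ((a + 1) ^ 2 + b ^ 2)
    - 2 * b / ((a - 1) ^ 2 + b ^ 2) - 2 * (b + 1) / (a ^ 2 + (b + 1) ^ 2)
    - 2 * (b - 1) / (a ^ 2 + (b - 1) ^ 2)

lemma hasDerivAt_vx (a b : ℝ) (h1 : (a + 1) ^ 2 + b ^ 2 ≠ 0) (h2 : (a - 1) ^ 2 + b ^ 2 ≠ 0)
    (h3 : a ^ 2 + (b + 1) ^ 2 ≠ 0) (h4 : a ^ 2 + (b - 1) ^ 2 ≠ 0) :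
    HasDerivAt (fun s => vP s b) (g1 a b) a := by
  have hA : HasDerivAt (fun s : ℝ => s ^ 4) (4 * a ^ 3) a := by simpa using hasDerivAt_pow 4 a
  have hB : HasDerivAt (fun s : ℝ => s ^ 2) (2 * a) a := by simpa using hasDerivAt_pow 2 a
  have hT : HasDerivAt (fun s : ℝ => TP s b)
      (5 * (4 * a ^ 3) + 2 * (2 * a) * (3 + 5 * b ^ 2)) a := by
    unfold TP
    exact ((((hA.const_mul 5).const_add 5).sub_const (6 * b ^ 2)).add_const
      (5 * b ^ 4)).add ((hB.const_mul 2).mul_const (3 + 5 * b ^ 2))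
  have hd1 : HasDerivAt (fun s : ℝ => (s + 1) ^ 2 + b ^ 2) (2 * (a + 1) ^ 1 * 1) a :=
    (((hasDerivAt_id a).add_const 1).pow 2).add_const (b ^ 2)
  have hd2 : HasDerivAt (fun s : ℝ => (s - 1) ^ 2 + b ^ 2) (2 * (a - 1) ^ 1 * 1) a :=
    (((hasDerivAt_id a).sub_const 1).pow 2).add_const (b ^ 2)
  have hd3 : HasDerivAt (fun s : ℝ => s ^ 2 + (b + 1) ^ 2) (2 * a) a :=
    hB.add_const ((b + 1) ^ 2)
  have hd4 : HasDerivAt (fun s : ℝ => s ^ 2 + (b - 1) ^ 2) (2 * a) a :=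
    hB.add_const ((b - 1) ^ 2)
  have H := ((((hT.log (ne_of_gt (TP_pos a b))).const_add (Real.log 4)).sub
      (hd1.log h1)).sub (hd2.log h2)).sub (hd3.log h3) |>.sub (hd4.log h4)
  refine H.congr_deriv ?_
  unfold g1
  ring

lemma hasDerivAt_vy (a b : ℝ) (h1 : (a + 1) ^ 2 + b ^ 2 ≠ 0) (h2 : (a - 1) ^ 2 + b ^ 2 ≠ 0)
    (h3 : a ^ 2 + (b + 1) ^ 2 ≠ 0) (h4 : a ^ 2 + (b - 1) ^ 2 ≠ 0) :
    HasDerivAt (fun s => vP a s) (g2 a b) b := by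
  have hA : HasDerivAt (fun s : ℝ => s ^ 4) (4 * b ^ 3) b := by simpa using hasDerivAt_pow 4 b
  have hB : HasDerivAt (fun s : ℝ => s ^ 2) (2 * b) b := by simpa using hasDerivAt_pow 2 b
  have hT : HasDerivAt (fun s : ℝ => TP a s)
      (-(6 * (2 * b)) + 5 * (4 * b ^ 3) + 2 * a ^ 2 * (5 * (2 * b))) b := by
    unfold TP
    exact (((hB.const_mul 6).const_sub (5 + 5 * a ^ 4)).add (hA.const_mul 5)).add
      (((hB.const_mul 5).const_add 3).const_mul (2 * a ^ 2))
  have hd1 : HasDerivAt (fun s : ℝ => (a + 1) ^ 2 + s ^ 2) (2 * b) b :=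
    hB.const_add ((a + 1) ^ 2)
  have hd2 : HasDerivAt (fun s : ℝ => (a - 1) ^ 2 + s ^ 2) (2 * b) b :=
    hB.const_add ((a - 1) ^ 2)
  have hd3 : HasDerivAt (fun s : ℝ => a ^ 2 + (s + 1) ^ 2) (2 * (b + 1) ^ 1 * 1) b :=
    ((((hasDerivAt_id b).add_const 1).pow 2)).const_add (a ^ 2)
  have hd4 : HasDerivAt (fun s : ℝ => a ^ 2 + (s - 1) ^ 2) (2 * (b - 1) ^ 1 * 1) b :=
    ((((hasDerivAt_id b).sub_const 1).pow 2)).const_add (a ^ 2)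
  have H := ((((hT.log (ne_of_gt (TP_pos a b))).const_add (Real.log 4)).sub
      (hd1.log h1)).sub (hd2.log h2)).sub (hd3.log h3) |>.sub (hd4.log h4)
  refine H.congr_deriv ?_
  unfold g2
  ring

noncomputable def G1 (a b : ℝ) : ℝ :=
  ((60 * a ^ 2 + 12 + 20 * b ^ 2) * TP a b - (20 * a ^ 3 + 12 * a + 20 * a * b ^ 2) ^ 2) / (TP a b) ^ 2
    - (2 * ((a + 1) ^ 2 + b ^ 2) - 2 * (a + 1) * (2 * (a + 1))) / ((a + 1) ^ 2 + b ^ 2) ^ 2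
    - (2 * ((a - 1) ^ 2 + b ^ 2) - 2 * (a - 1) * (2 * (a - 1))) / ((a - 1) ^ 2 + b ^ 2) ^ 2
    - (2 * (a ^ 2 + (b + 1) ^ 2) - 2 * a * (2 * a)) / (a ^ 2 + (b + 1) ^ 2) ^ 2
    - (2 * (a ^ 2 + (b - 1) ^ 2) - 2 * a * (2 * a)) / (a ^ 2 + (b - 1) ^ 2) ^ 2

noncomputable def G2 (a b : ℝ) : ℝ :=
  ((60 * b ^ 2 - 12 + 20 * a ^ 2) * TP a b - (20 * b ^ 3 - 12 * b + 20 * a ^ 2 * b) ^ 2) / (TP a b) ^ 2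
    - (2 * ((a + 1) ^ 2 + b ^ 2) - 2 * b * (2 * b)) / ((a + 1) ^ 2 + b ^ 2) ^ 2
    - (2 * ((a - 1) ^ 2 + b ^ 2) - 2 * b * (2 * b)) / ((a - 1) ^ 2 + b ^ 2) ^ 2
    - (2 * (a ^ 2 + (b + 1) ^ 2) - 2 * (b + 1) * (2 * (b + 1))) / (a ^ 2 + (b + 1) ^ 2) ^ 2
    - (2 * (a ^ 2 + (b - 1) ^ 2) - 2 * (b - 1) * (2 * (b - 1))) / (a ^ 2 + (b - 1) ^ 2) ^ 2

lemma hasDerivAt_g1x (a b : ℝ) (h1 : (a + 1) ^ 2 + b ^ 2 ≠ 0) (h2 : (a - 1) ^ 2 + b ^ 2 ≠ 0)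
    (h3 : a ^ 2 + (b + 1) ^ 2 ≠ 0) (h4 : a ^ 2 + (b - 1) ^ 2 ≠ 0) :
    HasDerivAt (fun t => g1 t b) (G1 a b) a := by
  have hB : HasDerivAt (fun s : ℝ => s ^ 2) (2 * a) a := by simpa using hasDerivAt_pow 2 a
  have hC : HasDerivAt (fun s : ℝ => s ^ 3) (3 * a ^ 2) a := by simpa using hasDerivAt_pow 3 a
  have hT : HasDerivAt (fun s : ℝ => TP s b)
      (5 * (4 * a ^ 3) + 2 * (2 * a) * (3 + 5 * b ^ 2)) a := by
    have hA : HasDerivAt (fun s : ℝ => s ^ 4) (4 * a ^ 3) a := by simpa using hasDerivAt_pow 4 a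
    unfold TP
    exact ((((hA.const_mul 5).const_add 5).sub_const (6 * b ^ 2)).add_const
      (5 * b ^ 4)).add ((hB.const_mul 2).mul_const (3 + 5 * b ^ 2))
  have hn : HasDerivAt (fun t : ℝ => 20 * t ^ 3 + 12 * t + 20 * t * b ^ 2)
      (20 * (3 * a ^ 2) + 12 * 1 + 20 * 1 * b ^ 2) a :=
    ((hC.const_mul 20).add ((hasDerivAt_id a).const_mul 12)).add
      (((hasDerivAt_id a).const_mul 20).mul_const (b ^ 2))
  have hd1 : HasDerivAt (fun s : ℝ => (s + 1) ^ 2 + b ^ 2) (2 * (a + 1) ^ 1 * 1) a :=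
    (((hasDerivAt_id a).add_const 1).pow 2).add_const (b ^ 2)
  have hd2 : HasDerivAt (fun s : ℝ => (s - 1) ^ 2 + b ^ 2) (2 * (a - 1) ^ 1 * 1) a :=
    (((hasDerivAt_id a).sub_const 1).pow 2).add_const (b ^ 2)
  have hd3 : HasDerivAt (fun s : ℝ => s ^ 2 + (b + 1) ^ 2) (2 * a) a := hB.add_const ((b + 1) ^ 2)
  have hd4 : HasDerivAt (fun s : ℝ => s ^ 2 + (b - 1) ^ 2) (2 * a) a := hB.add_const ((b - 1) ^ 2)
  have hm1 : HasDerivAt (fun t : ℝ => 2 * (t + 1)) (2 * 1) a :=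
    ((hasDerivAt_id a).add_const 1).const_mul 2
  have hm2 : HasDerivAt (fun t : ℝ => 2 * (t - 1)) (2 * 1) a :=
    ((hasDerivAt_id a).sub_const 1).const_mul 2
  have hm3 : HasDerivAt (fun t : ℝ => 2 * t) (2 * 1) a := (hasDerivAt_id a).const_mul 2
  have H := ((((hn.div hT (ne_of_gt (TP_pos a b))).sub (hm1.div hd1 h1)).sub
      (hm2.div hd2 h2)).sub (hm3.div hd3 h3)).sub (hm3.div hd4 h4)
  have hfun : (fun t => g1 t b) = fun t : ℝ =>
      (20 * t ^ 3 + 12 * t + 20 * t * b ^ 2) / TP t b - 2 * (t + 1) / ((t + 1) ^ 2 + b ^ 2)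
        - 2 * (t - 1) / ((t - 1) ^ 2 + b ^ 2) - 2 * t / (t ^ 2 + (b + 1) ^ 2)
        - 2 * t / (t ^ 2 + (b - 1) ^ 2) := by
    funext t; rw [g1]
  rw [hfun]
  refine H.congr_deriv ?_
  unfold G1
  ring

lemma hasDerivAt_g2y (a b : ℝ) (h1 : (a + 1) ^ 2 + b ^ 2 ≠ 0) (h2 : (a - 1) ^ 2 + b ^ 2 ≠ 0)
    (h3 : a ^ 2 + (b + 1) ^ 2 ≠ 0) (h4 : a ^ 2 + (b - 1) ^ 2 ≠ 0) :
    HasDerivAt (fun t => g2 a t) (G2 a b) b := by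
  have hB : HasDerivAt (fun s : ℝ => s ^ 2) (2 * b) b := by simpa using hasDerivAt_pow 2 b
  have hC : HasDerivAt (fun s : ℝ => s ^ 3) (3 * b ^ 2) b := by simpa using hasDerivAt_pow 3 b
  have hT : HasDerivAt (fun s : ℝ => TP a s)
      (-(6 * (2 * b)) + 5 * (4 * b ^ 3) + 2 * a ^ 2 * (5 * (2 * b))) b := by
    have hA : HasDerivAt (fun s : ℝ => s ^ 4) (4 * b ^ 3) b := by simpa using hasDerivAt_pow 4 b
    unfold TP
    exact (((hB.const_mul 6).const_sub (5 + 5 * a ^ 4)).add (hA.const_mul 5)).add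
      (((hB.const_mul 5).const_add 3).const_mul (2 * a ^ 2))
  have hn : HasDerivAt (fun t : ℝ => 20 * t ^ 3 - 12 * t + 20 * a ^ 2 * t)
      (20 * (3 * b ^ 2) - 12 * 1 + 20 * a ^ 2 * 1) b :=
    ((hC.const_mul 20).sub ((hasDerivAt_id b).const_mul 12)).add
      ((hasDerivAt_id b).const_mul (20 * a ^ 2))
  have hd1 : HasDerivAt (fun s : ℝ => (a + 1) ^ 2 + s ^ 2) (2 * b) b := hB.const_add ((a + 1) ^ 2)
  have hd2 : HasDerivAt (fun s : ℝ => (a - 1) ^ 2 + s ^ 2) (2 * b) b := hB.const_add ((a - 1) ^ 2)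
  have hd3 : HasDerivAt (fun s : ℝ => a ^ 2 + (s + 1) ^ 2) (2 * (b + 1) ^ 1 * 1) b :=
    ((((hasDerivAt_id b).add_const 1).pow 2)).const_add (a ^ 2)
  have hd4 : HasDerivAt (fun s : ℝ => a ^ 2 + (s - 1) ^ 2) (2 * (b - 1) ^ 1 * 1) b :=
    ((((hasDerivAt_id b).sub_const 1).pow 2)).const_add (a ^ 2)
  have hm1 : HasDerivAt (fun t : ℝ => 2 * (t + 1)) (2 * 1) b :=
    ((hasDerivAt_id b).add_const 1).const_mul 2
  have hm2 : HasDerivAt (fun t : ℝ => 2 * (t - 1)) (2 * 1) b :=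
    ((hasDerivAt_id b).sub_const 1).const_mul 2
  have hm3 : HasDerivAt (fun t : ℝ => 2 * t) (2 * 1) b := (hasDerivAt_id b).const_mul 2
  have H := ((((hn.div hT (ne_of_gt (TP_pos a b))).sub (hm3.div hd1 h1)).sub
      (hm3.div hd2 h2)).sub (hm1.div hd3 h3)).sub (hm2.div hd4 h4)
  have hfun : (fun t => g2 a t) = fun t : ℝ =>
      (20 * t ^ 3 - 12 * t + 20 * a ^ 2 * t) / TP a t - 2 * t / ((a + 1) ^ 2 + t ^ 2)
        - 2 * t / ((a - 1) ^ 2 + t ^ 2) - 2 * (t + 1) / (a ^ 2 + (t + 1) ^ 2)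
        - 2 * (t - 1) / (a ^ 2 + (t - 1) ^ 2) := by
    funext t; rw [g2]
  rw [hfun]
  refine H.congr_deriv ?_
  unfold G2
  ring

lemma final_identity (a b : ℝ) (h1 : (a + 1) ^ 2 + b ^ 2 ≠ 0) (h2 : (a - 1) ^ 2 + b ^ 2 ≠ 0)
    (h3 : a ^ 2 + (b + 1) ^ 2 ≠ 0) (h4 : a ^ 2 + (b - 1) ^ 2 ≠ 0) :
    G1 a b + G2 a b = 256 * (a ^ 2 + b ^ 2) /
      (5 + 5 * a ^ 4 - 6 * b ^ 2 + 5 * b ^ 4 + 2 * a ^ 2 * (3 + 5 * b ^ 2)) ^ 2 := by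
  have hT : TP a b ≠ 0 := ne_of_gt (TP_pos a b)
  unfold G1 G2 TP
  unfold TP at hT
  field_simp
  ring

theorem laplacian_log_lambda (x y : ℝ)
    (h1 : (x + 1) ^ 2 + y ^ 2 ≠ 0) (h2 : (x - 1) ^ 2 + y ^ 2 ≠ 0)
    (h3 : x ^ 2 + (y + 1) ^ 2 ≠ 0) (h4 : x ^ 2 + (y - 1) ^ 2 ≠ 0)
    (hf : 0 < fP x y) :
    lap2 (fun a b => Real.log (lamP a b)) x y =
      256 * (x ^ 2 + y ^ 2) /
        (5 + 5 * x ^ 4 - 6 * y ^ 2 + 5 * y ^ 4 + 2 * x ^ 2 * (3 + 5 * y ^ 2)) ^ 2 := by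
  -- the open set of good points in the x-direction
  set U : Set ℝ := {t | ((t + 1) ^ 2 + y ^ 2 ≠ 0) ∧ ((t - 1) ^ 2 + y ^ 2 ≠ 0) ∧
      (t ^ 2 + (y + 1) ^ 2 ≠ 0) ∧ (t ^ 2 + (y - 1) ^ 2 ≠ 0)} with hUdef
  have hUopen : IsOpen U := by
    have c1 : Continuous fun t : ℝ => (t + 1) ^ 2 + y ^ 2 := by fun_prop
    have c2 : Continuous fun t : ℝ => (t - 1) ^ 2 + y ^ 2 := by fun_prop
    have c3 : Continuous fun t : ℝ => t ^ 2 + (y + 1) ^ 2 := by fun_prop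
    have c4 : Continuous fun t : ℝ => t ^ 2 + (y - 1) ^ 2 := by fun_prop
    exact ((isOpen_ne.preimage c1).and ((isOpen_ne.preimage c2).and
      ((isOpen_ne.preimage c3).and (isOpen_ne.preimage c4))))
  have hxU : x ∈ U := ⟨h1, h2, h3, h4⟩
  have hx_deriv : ∀ t ∈ U, deriv (fun s => Real.log (lamP s y)) t = g1 t y := by
    intro t ht
    have hloc : (fun s => Real.log (lamP s y)) =ᶠ[nhds t] fun s => vP s y := by
      filter_upwards [hUopen.mem_nhds ht] with s hs
      exact loglam_eq s y hs.1 hs.2.1 hs.2.2.1 hs.2.2.2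
    rw [hloc.deriv_eq, (hasDerivAt_vx t y ht.1 ht.2.1 ht.2.2.1 ht.2.2.2).deriv]
  have hx_ev : (fun t => deriv (fun s => Real.log (lamP s y)) t) =ᶠ[nhds x]
      fun t => g1 t y := by
    filter_upwards [hUopen.mem_nhds hxU] with t ht
    exact hx_deriv t ht
  -- the open set of good points in the y-direction
  set V : Set ℝ := {s | ((x + 1) ^ 2 + s ^ 2 ≠ 0) ∧ ((x - 1) ^ 2 + s ^ 2 ≠ 0) ∧
      (x ^ 2 + (s + 1) ^ 2 ≠ 0) ∧ (x ^ 2 + (s - 1) ^ 2 ≠ 0)} with hVdef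
  have hVopen : IsOpen V := by
    have c1 : Continuous fun s : ℝ => (x + 1) ^ 2 + s ^ 2 := by fun_prop
    have c2 : Continuous fun s : ℝ => (x - 1) ^ 2 + s ^ 2 := by fun_prop
    have c3 : Continuous fun s : ℝ => x ^ 2 + (s + 1) ^ 2 := by fun_prop
    have c4 : Continuous fun s : ℝ => x ^ 2 + (s - 1) ^ 2 := by fun_prop
    exact ((isOpen_ne.preimage c1).and ((isOpen_ne.preimage c2).and
      ((isOpen_ne.preimage c3).and (isOpen_ne.preimage c4))))
  have hyV : y ∈ V := ⟨h1, h2, h3, h4⟩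
  have hy_deriv : ∀ t ∈ V, deriv (fun s => Real.log (lamP x s)) t = g2 x t := by
    intro t ht
    have hloc : (fun s => Real.log (lamP x s)) =ᶠ[nhds t] fun s => vP x s := by
      filter_upwards [hVopen.mem_nhds ht] with s hs
      exact loglam_eq x s hs.1 hs.2.1 hs.2.2.1 hs.2.2.2
    rw [hloc.deriv_eq, (hasDerivAt_vy x t ht.1 ht.2.1 ht.2.2.1 ht.2.2.2).deriv]
  have hy_ev : (fun t => deriv (fun s => Real.log (lamP x s)) t) =ᶠ[nhds y]
      fun t => g2 x t := by
    filter_upwards [hVopen.mem_nhds hyV] with t ht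
    exact hy_deriv t ht
  have e1 : deriv (fun t => deriv (fun s => Real.log (lamP s y)) t) x = G1 x y := by
    rw [hx_ev.deriv_eq, (hasDerivAt_g1x x y h1 h2 h3 h4).deriv]
  have e2 : deriv (fun t => deriv (fun s => Real.log (lamP x s)) t) y = G2 x y := by
    rw [hy_ev.deriv_eq, (hasDerivAt_g2y x y h1 h2 h3 h4).deriv]
  unfold lap2
  simp only []
  rw [e1, e2]
  exact final_identity x y h1 h2 h3 h4
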